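/- Let τ₀ be a densely defined accretive continuous closed form on L₂(m) whose associated semigroup S is positive (equivalently, u ∈ D(τ₀) implies u⁺ ∈ D(τ₀) and τ₀(u⁺,u⁻) ≤ 0). Let j ≥ 0 be measurable and τ = τ₀ + τ_j the perturbed form. Then τ satisfies the positivity criterion: for u ∈ D(τ), u⁺ ∈ D(τ) and τ(u⁺, u⁻) ≤ 0; hence the semigroup T associated to τ is positive. -/

import Mathlib

open MeasureTheory Set
open scoped ENNReal

lemma aux_sq_le (a b : ℝ) : (max a 0 - max b 0) ^ 2 ≤ (a - b) ^ 2 := by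
  rw [← sq_abs (max a 0 - max b 0), ← sq_abs (a - b)]
  exact pow_le_pow_left₀ (abs_nonneg _) (abs_max_sub_max_le_abs a b 0) 2

lemma aux_prod_nonpos (a b : ℝ) :
    (max a 0 - max b 0) * (max (-a) 0 - max (-b) 0) ≤ 0 := by
  rcases le_total a 0 with ha | ha <;> rcases le_total b 0 with hb | hb <;>
    simp [max_eq_left, max_eq_right, ha, hb, neg_nonneg.mpr, neg_nonpos.mpr] <;>
    nlinarith

/-- If `τ₀` satisfies the Ouhabaz positivity criterion (`u ∈ D(τ₀)` implies
`u⁺ ∈ D(τ₀)` and `τ₀(u⁺,u⁻) ≤ 0`), then so does the perturbed form `τ = τ₀ + τ_j`: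
for `u ∈ D(τ)`, `u⁺ ∈ D(τ)` and `τ(u⁺,u⁻) ≤ 0`. -/
theorem perturbed_form_positivity_criterion
    {Ω : Type*} [MeasurableSpace Ω] (μ : Measure Ω)
    (D₀ : Set (Ω → ℝ)) (τ₀ : (Ω → ℝ) → (Ω → ℝ) → ℝ)
    (hD₀L2 : ∀ u ∈ D₀, MemLp u 2 μ)
    (hpos : ∀ u ∈ D₀, (fun x => max (u x) 0) ∈ D₀ ∧
      τ₀ (fun x => max (u x) 0) (fun x => max (-u x) 0) ≤ 0)
    (j : Ω × Ω → ℝ) (hjm : Measurable j) (hj0 : ∀ z, 0 ≤ j z) :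
    ∀ u : Ω → ℝ, u ∈ D₀ →
      (∫⁻ z : Ω × Ω,
        ENNReal.ofReal ((u z.1 - u z.2) ^ 2 * j z) ∂(μ.prod μ)) < ⊤ →
      ((fun x => max (u x) 0) ∈ D₀ ∧
        (∫⁻ z : Ω × Ω,
          ENNReal.ofReal ((max (u z.1) 0 - max (u z.2) 0) ^ 2 * j z)
          ∂(μ.prod μ)) < ⊤ ∧
        τ₀ (fun x => max (u x) 0) (fun x => max (-u x) 0) +
          (∫ z : Ω × Ω,
            (max (u z.1) 0 - max (u z.2) 0) * (max (-u z.1) 0 - max (-u z.2) 0) * j z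
            ∂(μ.prod μ)) ≤ 0) := by
  intro u hu hfin
  obtain ⟨hmem, hτ⟩ := hpos u hu
  refine ⟨hmem, ?_, ?_⟩
  · refine lt_of_le_of_lt (lintegral_mono fun z => ?_) hfin
    exact ENNReal.ofReal_le_ofReal
      (mul_le_mul_of_nonneg_right (aux_sq_le _ _) (hj0 z))
  · have hint : (∫ z : Ω × Ω,
        (max (u z.1) 0 - max (u z.2) 0) * (max (-u z.1) 0 - max (-u z.2) 0) * j z
        ∂(μ.prod μ)) ≤ 0 :=
      integral_nonpos fun z =>
        mul_nonpos_of_nonpos_of_nonneg (aux_prod_nonpos _ _) (hj0 z)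
    linarith
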